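/- arXiv:1306.1692 — 6 statements merged into one kernel-verified Lean document; each statement's English description precedes it below -/
import Mathlib

section
/- If p : V \ {m} → V is injective and satisfies p(v) > v for every v ∈ V \ {m}, then p(v) = min{w ∈ V : w > v} for every v ∈ V \ {m}; in particular there is exactly one such map p, namely the one linking each node to the next-larger node. (This shows that the sorted-list structure of the legal state, in which every node other than the maximum has exactly one predecessor larger than itself and is the unique successor of its predecessor, is uniquely determined by the node set.) -/
theorem stmt1_aux {α : Type*} [LinearOrder α] (V : Finset α) (hV : V.Nonempty)
    (m : α) (hm : m = V.max' hV) (p : α → α)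
    (hmem : ∀ v ∈ V, v ≠ m → p v ∈ V)
    (hgt : ∀ v ∈ V, v ≠ m → v < p v)
    (hinj : ∀ v ∈ V, v ≠ m → ∀ w ∈ V, w ≠ m → p v = p w → v = w) :
    ∀ v ∈ V, v ≠ m → IsLeast {w | w ∈ V ∧ v < w} (p v) := by
  intro v hv hvm
  have hmV : m ∈ V := hm ▸ V.max'_mem hV
  have hvm' : v < m := lt_of_le_of_ne (hm ▸ V.le_max' v hv) hvm
  set F := V.filter (fun u => v < u) with hF
  have hFne : F.Nonempty := ⟨m, by simp [hF, hmV, hvm']⟩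
  set s := F.min' hFne with hs
  have hsF : s ∈ F := F.min'_mem hFne
  have hsV : s ∈ V := (Finset.mem_filter.mp hsF).1
  have hvs : v < s := (Finset.mem_filter.mp hsF).2
  have hpF : p v ∈ F := Finset.mem_filter.mpr ⟨hmem v hv hvm, hgt v hv hvm⟩
  have hsp : s ≤ p v := F.min'_le _ hpF
  have hps : p v = s := by
    by_contra hne
    have hsp' : s < p v := lt_of_le_of_ne hsp (Ne.symm hne)
    set G := V.filter (fun u => s ≤ u) with hG
    set A := insert v (G.erase m) with hA
    set B := V.filter (fun u => s < u) with hB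
    have hmG : m ∈ G := Finset.mem_filter.mpr ⟨hmV, hm ▸ V.le_max' s hsV⟩
    have hvA : v ∉ G.erase m := by
      intro h
      have := (Finset.mem_filter.mp (Finset.mem_of_mem_erase h)).2
      exact absurd this (not_le.mpr hvs)
    have cardA : A.card = G.card := by
      rw [hA, Finset.card_insert_of_notMem hvA, Finset.card_erase_of_mem hmG]
      have : 1 ≤ G.card := Finset.card_pos.mpr ⟨m, hmG⟩
      omega
    have hBG : B ⊂ G := by
      constructor
      · intro u hu
        simp only [hB, Finset.mem_filter] at hu
        exact Finset.mem_filter.mpr ⟨hu.1, le_of_lt hu.2⟩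
      · intro hGB
        have : s ∈ B := hGB (Finset.mem_filter.mpr ⟨hsV, le_refl s⟩)
        simp [hB] at this
    have cardB : B.card < G.card := Finset.card_lt_card hBG
    have hAmem : ∀ u ∈ A, u ∈ V ∧ u ≠ m := by
      intro u hu
      rcases Finset.mem_insert.mp hu with rfl | hu'
      · exact ⟨hv, hvm⟩
      · exact ⟨(Finset.mem_filter.mp (Finset.mem_of_mem_erase hu')).1,
          Finset.ne_of_mem_erase hu'⟩
    have hmaps : ∀ u ∈ A, p u ∈ B := by
      intro u hu
      rcases Finset.mem_insert.mp hu with rfl | hu'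
      · exact Finset.mem_filter.mpr ⟨hmem u hv hvm, hsp'⟩
      · have hum : u ≠ m := Finset.ne_of_mem_erase hu'
        have huV : u ∈ V := (Finset.mem_filter.mp (Finset.mem_of_mem_erase hu')).1
        have hsu : s ≤ u := (Finset.mem_filter.mp (Finset.mem_of_mem_erase hu')).2
        exact Finset.mem_filter.mpr ⟨hmem u huV hum, lt_of_le_of_lt hsu (hgt u huV hum)⟩
    have hle : A.card ≤ B.card := by
      apply Finset.card_le_card_of_injOn p hmaps
      intro a ha b hb hab
      obtain ⟨haV, ham⟩ := hAmem a ha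
      obtain ⟨hbV, hbm⟩ := hAmem b hb
      exact hinj a haV ham b hbV hbm hab
    omega
  rw [hps]
  exact ⟨⟨hsV, hvs⟩, fun w hw => F.min'_le w (Finset.mem_filter.mpr ⟨hw.1, hw.2⟩)⟩


/-- If `p : V \ {m} → V` (with `m = max V`) is injective and satisfies `p v > v`, then
`p v` is the least element of `V` above `v` for every `v ∈ V \ {m}`; in particular any
two maps with these properties agree on `V \ {m}`, so the sorted-list structure of the
legal state is uniquely determined by the node set. -/
theorem stmt1 {α : Type*} [LinearOrder α] (V : Finset α) (hV : V.Nonempty)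
    (m : α) (hm : m = V.max' hV) (p : α → α)
    (hmem : ∀ v ∈ V, v ≠ m → p v ∈ V)
    (hgt : ∀ v ∈ V, v ≠ m → v < p v)
    (hinj : ∀ v ∈ V, v ≠ m → ∀ w ∈ V, w ≠ m → p v = p w → v = w) :
    (∀ v ∈ V, v ≠ m → IsLeast {w | w ∈ V ∧ v < w} (p v)) ∧
    (∀ q : α → α,
      (∀ v ∈ V, v ≠ m → q v ∈ V) →
      (∀ v ∈ V, v ≠ m → v < q v) →
      (∀ v ∈ V, v ≠ m → ∀ w ∈ V, w ≠ m → q v = q w → v = w) →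
      ∀ v ∈ V, v ≠ m → q v = p v) := by
  refine ⟨stmt1_aux V hV m hm p hmem hgt hinj, ?_⟩
  intro q hqmem hqgt hqinj v hv hvm
  exact IsLeast.unique (stmt1_aux V hV m hm q hqmem hqgt hqinj v hv hvm)
    (stmt1_aux V hV m hm p hmem hgt hinj v hv hvm)
end

section
/- One round of the linearization dynamics preserves the structure: the new map p' again satisfies the max-heap property (p'(v) > v whenever defined); p'(v) is defined if and only if p(v) is defined, so the set of heads is unchanged; and every node has the same head under p' as under p, so the partition of V into heaps is unchanged. -/
/-- `pIter p k v` is the `k`-fold iterate of the partial predecessor map `p` starting at `v`. -/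
def pIter {α : Type*} (p : α → Option α) : ℕ → α → Option α
  | 0, v => some v
  | k + 1, v => (p v).bind (pIter p k)

/-- The max-heap property: whenever `p v` is defined for `v ∈ V`, it is a node of `V`
strictly larger than `v`. -/
def HeapProp {α : Type*} [LinearOrder α] (V : Finset α) (p : α → Option α) : Prop :=
  ∀ v ∈ V, ∀ w, p v = some w → w ∈ V ∧ v < w

/-- One round of the linearization dynamics: every non-maximum child of a node `x`
gets the maximum child of `x` as its new predecessor; all other nodes keep their
predecessor. -/
def roundStep {α : Type*} [LinearOrder α] (V : Finset α) (p : α → Option α) :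
    α → Option α := fun v =>
  match p v with
  | none => none
  | some x =>
    if h : (V.filter (fun w => p w = some x)).Nonempty then
      if v = (V.filter (fun w => p w = some x)).max' h then some x
      else some ((V.filter (fun w => p w = some x)).max' h)
    else some x

section Aux

variable {α : Type*} [LinearOrder α]

/-- `h` is the head of `v` under `p`. -/
def HeadOf (p : α → Option α) (v h : α) : Prop :=
  (∃ k, pIter p k v = some h) ∧ p h = none

lemma pIter_add (p : α → Option α) (j m : ℕ) :
    ∀ v, pIter p (j + m) v = (pIter p j v).bind (pIter p m) := by
  induction j with
  | zero => intro v; simp [pIter]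
  | succ j ih =>
    intro v
    have hjm : j + 1 + m = (j + m) + 1 := by omega
    rw [hjm]
    show (p v).bind (pIter p (j + m)) = ((p v).bind (pIter p j)).bind (pIter p m)
    cases p v with
    | none => rfl
    | some w => simp [ih w]

lemma pIter_head_fix (p : α → Option α) {h' : α} (hn : p h' = none) :
    ∀ m h, pIter p m h' = some h → h = h' := by
  intro m h hm
  cases m with
  | zero => simpa [pIter] using hm.symm
  | succ m => simp [pIter, hn] at hm

lemma headOf_unique_aux (p : α → Option α) {v h h' : α} {j k : ℕ} (hle : j ≤ k)
    (hk : pIter p k v = some h) (hj : pIter p j v = some h') (hn : p h' = none) :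
    h = h' := by
  have := pIter_add p j (k - j) v
  rw [Nat.add_sub_cancel' hle] at this
  rw [hj, hk] at this
  exact pIter_head_fix p hn _ h this.symm

lemma headOf_unique (p : α → Option α) {v h h' : α}
    (h1 : HeadOf p v h) (h2 : HeadOf p v h') : h = h' := by
  obtain ⟨⟨k, hk⟩, hh⟩ := h1
  obtain ⟨⟨j, hj⟩, hh'⟩ := h2
  rcases le_total j k with hle | hle
  · exact headOf_unique_aux p hle hk hj hh'
  · exact (headOf_unique_aux p hle hj hk hh).symm

lemma headOf_step (p : α → Option α) {v x : α} (hv : p v = some x) (h : α) :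
    HeadOf p v h ↔ HeadOf p x h := by
  constructor
  · rintro ⟨⟨k, hk⟩, hh⟩
    cases k with
    | zero =>
      simp only [pIter, Option.some.injEq] at hk
      rw [hk] at hv; rw [hv] at hh; exact absurd hh (by simp)
    | succ k =>
      refine ⟨⟨k, ?_⟩, hh⟩
      simpa [pIter, hv] using hk
  · rintro ⟨⟨k, hk⟩, hh⟩
    exact ⟨⟨k + 1, by simp [pIter, hv, hk]⟩, hh⟩

variable (V : Finset α) (p : α → Option α)

lemma roundStep_none_iff (v : α) : roundStep V p v = none ↔ p v = none := by
  unfold roundStep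
  cases hv : p v with
  | none => simp
  | some x =>
    simp only
    split_ifs <;> simp

lemma roundStep_cases {v : α} (hvV : v ∈ V) {x : α} (hv : p v = some x) {w : α}
    (hw : roundStep V p v = some w) :
    w = x ∨ (w ∈ V ∧ p w = some x ∧ v < w) := by
  unfold roundStep at hw
  rw [hv] at hw
  simp only at hw
  split_ifs at hw with h1 h2
  · left; exact (Option.some.injEq _ _ ▸ hw).symm ▸ rfl
  · right
    have hwv : w = (V.filter (fun u => p u = some x)).max' h1 := by
      exact (Option.some.injEq _ _ ▸ hw).symm
    have hmem := Finset.max'_mem (V.filter (fun u => p u = some x)) h1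
    rw [← hwv] at hmem
    rw [Finset.mem_filter] at hmem
    have hvle : v ≤ w := by
      rw [hwv]
      exact Finset.le_max' _ v (Finset.mem_filter.mpr ⟨hvV, hv⟩)
    refine ⟨hmem.1, hmem.2, lt_of_le_of_ne hvle ?_⟩
    intro hvw; exact h2 (hvw ▸ hwv)
  · left; exact Option.some.injEq _ _ ▸ hw.symm

lemma roundStep_heap (hp : HeapProp V p) : HeapProp V (roundStep V p) := by
  intro v hvV w hw
  have hvne : p v ≠ none := by
    intro hn
    rw [(roundStep_none_iff V p v).mpr hn] at hw
    exact absurd hw (by simp)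
  obtain ⟨x, hx⟩ := Option.ne_none_iff_exists'.mp hvne
  rcases roundStep_cases V p hvV hx hw with rfl | ⟨hwV, _, hvw⟩
  · exact hp v hvV w hx
  · exact ⟨hwV, hvw⟩

lemma roundStep_head_step (hp : HeapProp V p) {v : α} (hvV : v ∈ V) {w : α}
    (hw : roundStep V p v = some w) (h : α) (hh : HeadOf p w h) : HeadOf p v h := by
  have hvne : p v ≠ none := by
    intro hn
    rw [(roundStep_none_iff V p v).mpr hn] at hw
    exact absurd hw (by simp)
  obtain ⟨x, hx⟩ := Option.ne_none_iff_exists'.mp hvne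
  rcases roundStep_cases V p hvV hx hw with rfl | ⟨_, hwx, _⟩
  · exact (headOf_step p hx h).mpr hh
  · exact (headOf_step p hx h).mpr ((headOf_step p hwx h).mp hh)

lemma roundStep_pIter (hp : HeapProp V p) :
    ∀ k v, v ∈ V → ∀ u, pIter (roundStep V p) k v = some u →
      u ∈ V ∧ ∀ h, HeadOf p u h → HeadOf p v h := by
  intro k
  induction k with
  | zero =>
    intro v hvV u hu
    simp only [pIter, Option.some.injEq] at hu
    exact hu ▸ ⟨hvV, fun _ hh => hh⟩
  | succ k ih =>
    intro v hvV u hu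
    simp only [pIter] at hu
    cases hq : roundStep V p v with
    | none => rw [hq] at hu; exact absurd hu (by simp)
    | some w =>
      rw [hq] at hu
      simp only [Option.bind_some] at hu
      have hwV : w ∈ V := (roundStep_heap V p hp v hvV w hq).1
      obtain ⟨huV, hhead⟩ := ih w hwV u hu
      exact ⟨huV, fun h hh => roundStep_head_step V p hp hvV hq h (hhead h hh)⟩

lemma heap_terminates (p' : α → Option α) (hp' : HeapProp V p') :
    ∀ n v, v ∈ V → (V.filter (fun w => v < w)).card ≤ n →
      ∃ k h, pIter p' k v = some h ∧ p' h = none := by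
  intro n
  induction n with
  | zero =>
    intro v hvV hcard
    cases hv : p' v with
    | none => exact ⟨0, v, rfl, hv⟩
    | some x =>
      obtain ⟨hxV, hvx⟩ := hp' v hvV x hv
      have : x ∈ V.filter (fun w => v < w) := Finset.mem_filter.mpr ⟨hxV, hvx⟩
      have := Finset.card_pos.mpr ⟨x, this⟩
      omega
  | succ n ih =>
    intro v hvV hcard
    cases hv : p' v with
    | none => exact ⟨0, v, rfl, hv⟩
    | some x =>
      obtain ⟨hxV, hvx⟩ := hp' v hvV x hv
      have hss : V.filter (fun w => x < w) ⊂ V.filter (fun w => v < w) := by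
        refine Finset.ssubset_iff_of_subset ?_ |>.mpr
          ⟨x, Finset.mem_filter.mpr ⟨hxV, hvx⟩, by simp⟩
        intro u hu
        rw [Finset.mem_filter] at hu ⊢
        exact ⟨hu.1, hvx.trans hu.2⟩
      have hlt := Finset.card_lt_card hss
      obtain ⟨k, h, hk, hh⟩ := ih x hxV (by omega)
      exact ⟨k + 1, h, by simp [pIter, hv, hk], hh⟩

end Aux

/-- One round of the linearization dynamics preserves the structure: the new map again
satisfies the max-heap property, it is defined exactly where `p` is defined (so the heads
are unchanged), and every node has the same head as before (so the partition into heaps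
is unchanged). -/
theorem stmt2 {α : Type*} [LinearOrder α] (V : Finset α) (p : α → Option α)
    (hp : HeapProp V p) :
    HeapProp V (roundStep V p) ∧
    (∀ v ∈ V, (roundStep V p v = none ↔ p v = none)) ∧
    (∀ v ∈ V, ∀ h : α,
      ((∃ k, pIter p k v = some h) ∧ p h = none) ↔
      ((∃ k, pIter (roundStep V p) k v = some h) ∧ roundStep V p h = none)) := by
  refine ⟨roundStep_heap V p hp, fun v _ => roundStep_none_iff V p v, fun v hvV h => ?_⟩
  constructor
  · rintro ⟨⟨k, hk⟩, hh⟩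
    obtain ⟨j, u, hu, hqu⟩ := heap_terminates V (roundStep V p) (roundStep_heap V p hp)
      (V.filter (fun w => v < w)).card v hvV le_rfl
    obtain ⟨huV, hhead⟩ := roundStep_pIter V p hp j v hvV u hu
    have hpu : p u = none := (roundStep_none_iff V p u).mp hqu
    have : HeadOf p v u := hhead u ⟨⟨0, rfl⟩, hpu⟩
    have huh : u = h := headOf_unique p this ⟨⟨k, hk⟩, hh⟩
    exact ⟨⟨j, huh ▸ hu⟩, huh ▸ hqu⟩
  · rintro ⟨⟨k, hk⟩, hqh⟩
    obtain ⟨hhV, hhead⟩ := roundStep_pIter V p hp k v hvV h hk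
    have hph : p h = none := (roundStep_none_iff V p h).mp hqh
    exact hhead h ⟨⟨0, rfl⟩, hph⟩
end

section
/- Let u_1 > u_2 > ⋯ > u_{|H|} be the elements of a heap H listed in descending order (so u_1 is the head of H). Then for every i, after at most i rounds of the linearization dynamics the heap on the vertex set H is linearized with respect to u_i. -/
/-- `H` is the heap with head `h`: `h` is a head, and `H` consists exactly of the nodes of
`V` from which iterating `p` reaches `h`. -/
def IsHeap {α : Type*} (V : Finset α) (p : α → Option α) (H : Finset α) (h : α) : Prop :=
  h ∈ V ∧ p h = none ∧ ∀ v, v ∈ H ↔ v ∈ V ∧ ∃ k, pIter p k v = some h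

/-- The heap `H` with head `h` is linearized with respect to `u`: every non-head node
`v ∈ H` with `v ≥ u` is the maximum among all nodes with the same predecessor. -/
def LinearizedWrt {α : Type*} [LinearOrder α] (V : Finset α) (p : α → Option α)
    (H : Finset α) (h u : α) : Prop :=
  ∀ v ∈ H, v ≠ h → u ≤ v → ∀ w ∈ V, p w = p v → w ≤ v

section Aux

variable {α : Type*} [LinearOrder α]

lemma roundStep_none {V : Finset α} {q : α → Option α} {v : α}
    (h : q v = none) : roundStep V q v = none := by
  unfold roundStep; rw [h]

lemma roundStep_some {V : Finset α} {q : α → Option α} {v x : α}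
    (hv : v ∈ V) (hqv : q v = some x) :
    ∃ hne : (V.filter (fun w => q w = some x)).Nonempty,
      roundStep V q v = if v = (V.filter (fun w => q w = some x)).max' hne then some x
        else some ((V.filter (fun w => q w = some x)).max' hne) := by
  have hne : (V.filter fun w => q w = some x).Nonempty :=
    ⟨v, Finset.mem_filter.2 ⟨hv, hqv⟩⟩
  refine ⟨hne, ?_⟩
  unfold roundStep
  rw [hqv]
  show (if h : (V.filter (fun w => q w = some x)).Nonempty then
      if v = (V.filter (fun w => q w = some x)).max' h then some x
      else some ((V.filter (fun w => q w = some x)).max' h)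
    else some x) = _
  rw [dif_pos hne]

lemma pIter_le {V : Finset α} {p : α → Option α} (hp : HeapProp V p) :
    ∀ (k : ℕ) (v w : α), v ∈ V → pIter p k v = some w → v ≤ w := by
  intro k
  induction k with
  | zero =>
    intro v w _ hIt
    simp only [pIter, Option.some.injEq] at hIt
    exact le_of_eq hIt
  | succ k ih =>
    intro v w hv hIt
    simp only [pIter] at hIt
    cases hxv : p v with
    | none => rw [hxv] at hIt; simp at hIt
    | some x =>
      rw [hxv] at hIt
      rw [Option.bind_some] at hIt
      obtain ⟨hxV, hvx⟩ := hp v hv x hxv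
      exact le_of_lt (lt_of_lt_of_le hvx (ih x w hxV hIt))

/-- The inductive invariant: after `t` rounds every non-head node of `H` has a parent
`x ∈ H` above it which is either its immediate superior in `H`, or has at least `t`
elements of `H` above it. -/
def LinInv (V H : Finset α) (h : α) (t : ℕ) (q : α → Option α) : Prop :=
  q h = none ∧
  (∀ w ∈ V, ∀ x, q w = some x → x ∈ H → w ∈ H) ∧
  (∀ v ∈ H, v ≠ h → ∃ x, q v = some x ∧ x ∈ H ∧ v < x ∧
     ((∀ w ∈ H, v < w → x ≤ w) ∨ t ≤ (H.filter (fun w => x < w)).card))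

lemma insert_gt_subset {H : Finset α} {v x : α} (hx : x ∈ H) (hvx : v < x) :
    insert x (H.filter (fun w => x < w)) ⊆ H.filter (fun w => v < w) := by
  intro w hw
  simp only [Finset.mem_insert, Finset.mem_filter] at *
  rcases hw with rfl | ⟨hwH, hxw⟩
  · exact ⟨hx, hvx⟩
  · exact ⟨hwH, hvx.trans hxw⟩

lemma card_gt_lt {H : Finset α} {v x : α} (hx : x ∈ H) (hvx : v < x) :
    (H.filter (fun w => x < w)).card + 1 ≤ (H.filter (fun w => v < w)).card := by
  have := Finset.card_le_card (insert_gt_subset hx hvx)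
  rwa [Finset.card_insert_of_notMem (by simp)] at this

lemma inv_minSup {V H : Finset α} {h : α} {t : ℕ} {q : α → Option α}
    (hinv : LinInv V H h t q) {v : α} (hv : v ∈ H) (hvh : v ≠ h)
    (hcard : (H.filter (fun w => v < w)).card ≤ t + 1) :
    ∃ x, q v = some x ∧ x ∈ H ∧ v < x ∧ ∀ w ∈ H, v < w → x ≤ w := by
  obtain ⟨x, hqv, hxH, hvx, hd⟩ := hinv.2.2 v hv hvh
  refine ⟨x, hqv, hxH, hvx, ?_⟩
  rcases hd with hd | hd
  · exact hd
  · have h1 := card_gt_lt hxH hvx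
    have heq : insert x (H.filter (fun w => x < w)) = H.filter (fun w => v < w) := by
      apply Finset.eq_of_subset_of_card_le (insert_gt_subset hxH hvx)
      rw [Finset.card_insert_of_notMem (by simp)]
      omega
    intro w hw hvw
    have hwmem : w ∈ insert x (H.filter (fun w => x < w)) := by
      rw [heq]; exact Finset.mem_filter.2 ⟨hw, hvw⟩
    rcases Finset.mem_insert.1 hwmem with rfl | hw'
    · exact le_refl _
    · exact le_of_lt (Finset.mem_filter.1 hw').2

lemma inv_step {V H : Finset α} {h : α} {t : ℕ} {q : α → Option α}
    (hHV : H ⊆ V) (hmax : ∀ v ∈ H, v ≤ h) (hinv : LinInv V H h t q) :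
    LinInv V H h (t + 1) (roundStep V q) := by
  obtain ⟨hqh, hclo, hpar⟩ := hinv
  have hinv' : LinInv V H h t q := ⟨hqh, hclo, hpar⟩
  refine ⟨roundStep_none hqh, ?_, ?_⟩
  · -- closure
    intro w hw x hqw hxH
    cases hqw0 : q w with
    | none => rw [roundStep_none hqw0] at hqw; exact absurd hqw (by simp)
    | some y =>
      obtain ⟨hne, heq⟩ := roundStep_some hw hqw0
      rw [heq] at hqw
      split at hqw
      · -- w is max child, keeps parent y = x
        have : y = x := by injection hqw
        exact hclo w hw y hqw0 (this ▸ hxH)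
      · -- x is the max child of y
        have hxmem : x ∈ V.filter (fun w => q w = some y) := by
          have : (V.filter (fun w => q w = some y)).max' hne = x := by injection hqw
          exact this ▸ (V.filter (fun w => q w = some y)).max'_mem hne
        have hqx : q x = some y := (Finset.mem_filter.1 hxmem).2
        have hxh : x ≠ h := by
          intro e; rw [e, hqh] at hqx; exact absurd hqx (by simp)
        obtain ⟨y', hqx', hy'H, _, _⟩ := hpar x hxH hxh
        have : y' = y := by rw [hqx] at hqx'; exact (Option.some_inj.1 hqx').symm
        exact hclo w hw y hqw0 (this ▸ hy'H)
  · -- main clause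
    intro v hv hvh
    obtain ⟨x, hqv, hxH, hvx, hd⟩ := hpar v hv hvh
    obtain ⟨hne, heq⟩ := roundStep_some (hHV hv) hqv
    set C := V.filter (fun w => q w = some x) with hCdef
    set m := C.max' hne with hmdef
    have hmC : m ∈ C := C.max'_mem hne
    have hmV : m ∈ V := (Finset.mem_filter.1 hmC).1
    have hqm : q m = some x := (Finset.mem_filter.1 hmC).2
    have hmH : m ∈ H := hclo m hmV x hqm hxH
    have hvC : v ∈ C := Finset.mem_filter.2 ⟨hHV hv, hqv⟩
    have hvm : v ≤ m := C.le_max' v hvC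
    have hmh : m ≠ h := by
      intro e; rw [e, hqh] at hqm; exact absurd hqm (by simp)
    obtain ⟨x2, hqm2, _, hmx, _⟩ := hpar m hmH hmh
    have hx2 : x2 = x := by rw [hqm] at hqm2; exact (Option.some_inj.1 hqm2).symm
    rw [hx2] at hmx
    by_cases hvm' : v = m
    · -- v keeps its parent x
      rw [if_pos hvm'] at heq
      refine ⟨x, heq, hxH, hvx, ?_⟩
      rcases hd with hd | hd
      · exact Or.inl hd
      · by_cases hd2 : t + 1 ≤ (H.filter (fun w => x < w)).card
        · exact Or.inr hd2
        · left
          by_contra hcon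
          push_neg at hcon
          obtain ⟨w0, hw0H, hvw0, hw0x⟩ := hcon
          -- B: elements strictly between v and x
          have hBne : (H.filter (fun w => v < w ∧ w < x)).Nonempty :=
            ⟨w0, Finset.mem_filter.2 ⟨hw0H, hvw0, hw0x⟩⟩
          set B := H.filter (fun w => v < w ∧ w < x) with hBdef
          set s := B.max' hBne with hsdef
          have hsB : s ∈ B := B.max'_mem hBne
          obtain ⟨hsH, hvs, hsx⟩ : s ∈ H ∧ v < s ∧ s < x := by
            have := Finset.mem_filter.1 hsB; exact ⟨this.1, this.2.1, this.2.2⟩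
          have hsh : s ≠ h := by
            intro e
            exact absurd (hmax x hxH) (not_le.2 (e ▸ hsx))
          -- card of {w > s} is at most t + 1
          have hsub : H.filter (fun w => s < w) ⊆ insert x (H.filter (fun w => x < w)) := by
            intro w hw
            obtain ⟨hwH, hsw⟩ := Finset.mem_filter.1 hw
            rcases lt_trichotomy w x with hlt | rfl | hgt
            · exfalso
              have hwB : w ∈ B := Finset.mem_filter.2 ⟨hwH, hvs.trans hsw, hlt⟩
              exact absurd (B.le_max' w hwB) (not_le.2 hsw)
            · exact Finset.mem_insert_self _ _
            · exact Finset.mem_insert_of_mem (Finset.mem_filter.2 ⟨hwH, hgt⟩)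
          have hcards : (H.filter (fun w => s < w)).card ≤ t + 1 := by
            have := Finset.card_le_card hsub
            rw [Finset.card_insert_of_notMem (by simp)] at this
            omega
          obtain ⟨x', hqs, hx'H, hsx', hminS⟩ := inv_minSup hinv' hsH hsh hcards
          have hx'x : x' = x := by
            have hle : x' ≤ x := hminS x hxH hsx
            rcases lt_or_eq_of_le hle with hlt | e
            · exfalso
              have hx'B : x' ∈ B := Finset.mem_filter.2 ⟨hx'H, hvs.trans hsx', hlt⟩
              exact absurd (B.le_max' x' hx'B) (not_le.2 hsx')
            · exact e
          have hsC : s ∈ C := Finset.mem_filter.2 ⟨hHV hsH, by rw [hqs, hx'x]⟩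
          have : s ≤ m := C.le_max' s hsC
          rw [← hvm'] at this
          exact absurd this (not_le.2 hvs)
    · -- v's new parent is the max child m
      rw [if_neg hvm'] at heq
      have hvm2 : v < m := lt_of_le_of_ne hvm hvm'
      refine ⟨m, heq, hmH, hvm2, Or.inr ?_⟩
      rcases hd with hd | hd
      · exact absurd (hd m hmH hvm2) (not_le.2 hmx)
      · have := card_gt_lt hxH hmx
        omega

lemma inv_lin {V H : Finset α} {h u : α} {i : ℕ} {q : α → Option α}
    (hinv : LinInv V H h i q) (_hu : u ∈ H)
    (hcard : (H.filter (fun v => u ≤ v)).card ≤ i) :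
    LinearizedWrt V q H h u := by
  intro v hvH hvh huv w hwV hqweq
  have hcv : (H.filter (fun w => v < w)).card ≤ i + 1 := by
    have hsub : H.filter (fun w => v < w) ⊆ H.filter (fun w => u ≤ w) := by
      intro z hz
      obtain ⟨hzH, hvz⟩ := Finset.mem_filter.1 hz
      exact Finset.mem_filter.2 ⟨hzH, le_of_lt (lt_of_le_of_lt huv hvz)⟩
    have := Finset.card_le_card hsub
    omega
  obtain ⟨x, hqv, hxH, hvx, hminV⟩ := inv_minSup hinv hvH hvh hcv
  by_contra hcon
  replace hcon : v < w := lt_of_not_ge hcon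
  have hqw : q w = some x := by rw [hqweq, hqv]
  have hwH : w ∈ H := hinv.2.1 w hwV x hqw hxH
  have hwh : w ≠ h := by
    intro e; rw [e, hinv.1] at hqw; exact absurd hqw (by simp)
  have hcw : (H.filter (fun z => w < z)).card ≤ i + 1 := by
    have hsub : H.filter (fun z => w < z) ⊆ H.filter (fun z => u ≤ z) := by
      intro z hz
      obtain ⟨hzH, hwz⟩ := Finset.mem_filter.1 hz
      exact Finset.mem_filter.2 ⟨hzH, le_of_lt (lt_of_le_of_lt (huv.trans (le_of_lt hcon)) hwz)⟩
    have := Finset.card_le_card hsub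
    omega
  obtain ⟨x2, hqw2, _, hwx2, _⟩ := inv_minSup hinv hwH hwh hcw
  have hx2 : x2 = x := by rw [hqw] at hqw2; exact (Option.some_inj.1 hqw2).symm
  rw [hx2] at hwx2
  exact absurd (hminV w hwH hcon) (not_le.2 hwx2)

end Aux

/-- If `u₁ > u₂ > ⋯ > u_{|H|}` are the elements of a heap `H` in descending order, then
after at most `i` rounds of the linearization dynamics the heap on `H` is linearized with
respect to `u_i`.  Here `u_i` is described as the element `u ∈ H` whose rank
`|{v ∈ H : v ≥ u}|` equals `i`. -/
theorem stmt3 {α : Type*} [LinearOrder α] (V : Finset α) (p : α → Option α)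
    (hp : HeapProp V p) (H : Finset α) (h : α) (hheap : IsHeap V p H h) :
    ∀ u ∈ H, ∀ i : ℕ, (H.filter (fun v => u ≤ v)).card ≤ i →
      LinearizedWrt V ((fun q => roundStep V q)^[i] p) H h u := by
  obtain ⟨hhV, hph, hmem⟩ := hheap
  have hHV : H ⊆ V := fun v hv => ((hmem v).1 hv).1
  have hmax : ∀ v ∈ H, v ≤ h := by
    intro v hv
    obtain ⟨hvV, k, hk⟩ := (hmem v).1 hv
    exact pIter_le hp k v h hvV hk
  have hbase : LinInv V H h 0 p := by
    refine ⟨hph, ?_, ?_⟩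
    · intro w hw x hqw hxH
      obtain ⟨_, k, hk⟩ := (hmem x).1 hxH
      refine (hmem w).2 ⟨hw, k + 1, ?_⟩
      show (p w).bind (pIter p k) = some h
      rw [hqw, Option.bind_some]
      exact hk
    · intro v hv hvh
      obtain ⟨hvV, k, hk⟩ := (hmem v).1 hv
      cases k with
      | zero =>
        exfalso
        apply hvh
        simpa [pIter] using hk
      | succ k =>
        have hk' : (p v).bind (pIter p k) = some h := hk
        cases hpv : p v with
        | none => rw [hpv] at hk'; exact absurd hk' (by simp)
        | some x =>
          rw [hpv, Option.bind_some] at hk'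
          obtain ⟨hxV, hvx⟩ := hp v hvV x hpv
          exact ⟨x, rfl, (hmem x).2 ⟨hxV, k, hk'⟩, hvx, Or.inr (Nat.zero_le _)⟩
  have hiter : ∀ i : ℕ, LinInv V H h i ((fun q => roundStep V q)^[i] p) := by
    intro i
    induction i with
    | zero => exact hbase
    | succ i ih =>
      rw [Function.iterate_succ_apply']
      exact inv_step hHV hmax ih
  intro u hu i hcard
  exact inv_lin (hiter i) hu hcard
end

section
/- Any heap H becomes a sorted list after at most |H| rounds of the linearization dynamics; that is, after |H| rounds, every non-head node v ∈ H is the unique (hence maximum) child of its predecessor, and the predecessor links form a descending chain through all elements of H. -/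
set_option linter.unusedSectionVars false

namespace S5
variable {α : Type*} [LinearOrder α]

lemma pIter_zero (p : α → Option α) (v : α) : pIter p 0 v = some v := rfl
lemma pIter_succ (p : α → Option α) (k : ℕ) (v : α) :
    pIter p (k+1) v = (p v).bind (pIter p k) := rfl

lemma pIter_succ' (p : α → Option α) (k : ℕ) (v : α) :
    pIter p (k+1) v = (pIter p k v).bind p := by
  induction k generalizing v with
  | zero => cases hp : p v <;> simp [pIter, hp]
  | succ k ih =>
    rw [pIter_succ, pIter_succ]
    cases hp : p v with
    | none => simp
    | some x => simp [ih x]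

lemma roundStep_none (V : Finset α) (p : α → Option α) (v : α) (hv : p v = none) :
    roundStep V p v = none := by
  unfold roundStep; rw [hv]

lemma roundStep_some (V : Finset α) (p : α → Option α) (v x : α) (hx : p v = some x) :
    roundStep V p v =
      if h : (V.filter (fun w => p w = some x)).Nonempty then
        if v = (V.filter (fun w => p w = some x)).max' h then some x
        else some ((V.filter (fun w => p w = some x)).max' h)
      else some x := by
  unfold roundStep; rw [hx]

/-- rank: number of elements of `H` strictly above `v`. -/
def rk (H : Finset α) (v : α) : ℕ := (H.filter (fun w => v < w)).card

/-- the next element of `H` above `v` (junk value `v` if none). -/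
def nxt (H : Finset α) (v : α) : α :=
  if hne : (H.filter (fun w => v < w)).Nonempty then (H.filter (fun w => v < w)).min' hne else v

lemma filter_nonempty_of_rk (H : Finset α) (v : α) (h1 : 1 ≤ rk H v) :
    (H.filter (fun w => v < w)).Nonempty :=
  Finset.card_pos.mp (by exact h1)

lemma nxt_spec (H : Finset α) (v : α) (h1 : 1 ≤ rk H v) :
    nxt H v ∈ H ∧ v < nxt H v := by
  have hne := filter_nonempty_of_rk H v h1
  rw [nxt, dif_pos hne]
  have := Finset.min'_mem _ hne
  rw [Finset.mem_filter] at this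
  exact this

lemma le_of_lt_nxt (H : Finset α) (v : α) (h1 : 1 ≤ rk H v) (w : α) (hw : w ∈ H)
    (hlt : w < nxt H v) : w ≤ v := by
  have hne := filter_nonempty_of_rk H v h1
  rw [nxt, dif_pos hne] at hlt
  by_contra hc
  push_neg at hc
  exact absurd (Finset.min'_le _ w (Finset.mem_filter.mpr ⟨hw, hc⟩)) (not_le.mpr hlt)

lemma rk_lt_of_lt (H : Finset α) (v w : α) (hw : w ∈ H) (hvw : v < w) :
    rk H w < rk H v := by
  apply Finset.card_lt_card
  constructor
  · intro x hx
    rw [Finset.mem_filter] at hx ⊢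
    exact ⟨hx.1, hvw.trans hx.2⟩
  · intro hsub
    have : w ∈ H.filter (fun x => v < x) := Finset.mem_filter.mpr ⟨hw, hvw⟩
    have := Finset.mem_filter.mp (hsub this)
    exact lt_irrefl w this.2

lemma rk_inj (H : Finset α) (v w : α) (hv : v ∈ H) (hw : w ∈ H) (hr : rk H v = rk H w) :
    v = w := by
  rcases lt_trichotomy v w with h | h | h
  · exact absurd hr (Nat.ne_of_lt (rk_lt_of_lt H v w hw h)).symm
  · exact h
  · exact absurd hr (Nat.ne_of_lt (rk_lt_of_lt H w v hv h))

lemma rk_nxt (H : Finset α) (v : α) (h1 : 1 ≤ rk H v) :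
    rk H (nxt H v) = rk H v - 1 := by
  have hne := filter_nonempty_of_rk H v h1
  have hs := nxt_spec H v h1
  have key : H.filter (fun w => nxt H v < w) = (H.filter (fun w => v < w)).erase (nxt H v) := by
    ext x
    simp only [Finset.mem_filter, Finset.mem_erase]
    constructor
    · rintro ⟨hxH, hlt⟩
      exact ⟨ne_of_gt hlt, hxH, hs.2.trans hlt⟩
    · rintro ⟨hne', hxH, hlt⟩
      refine ⟨hxH, lt_of_le_of_ne ?_ (Ne.symm hne')⟩
      rw [nxt, dif_pos hne]
      exact Finset.min'_le _ x (Finset.mem_filter.mpr ⟨hxH, hlt⟩)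
  rw [rk, key, Finset.card_erase_of_mem]
  · rfl
  · rw [nxt, dif_pos hne]; exact Finset.min'_mem _ hne

lemma exists_rk (H : Finset α) : ∀ d : ℕ, ∀ v ∈ H, ∀ j, j ≤ rk H v → rk H v - j ≤ d →
    ∃ b ∈ H, rk H b = j := by
  intro d
  induction d with
  | zero =>
    intro v hv j hj hd
    exact ⟨v, hv, by omega⟩
  | succ d ih =>
    intro v hv j hj hd
    rcases eq_or_lt_of_le hj with heq | hlt
    · exact ⟨v, hv, heq.symm⟩
    · have h1 : 1 ≤ rk H v := by omega
      have hs := nxt_spec H v h1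
      have hr := rk_nxt H v h1
      exact ih (nxt H v) hs.1 j (by omega) (by omega)

section heapfacts
variable (V : Finset α) (p : α → Option α) (H : Finset α) (h : α)

lemma le_of_pIter (hp : HeapProp V p) :
    ∀ k v w, v ∈ V → pIter p k v = some w → v ≤ w ∧ w ∈ V := by
  intro k
  induction k with
  | zero => intro v w hv hit; rw [pIter_zero] at hit; cases hit; exact ⟨le_rfl, hv⟩
  | succ k ih =>
    intro v w hv hit
    rw [pIter_succ] at hit
    cases hx : p v with
    | none => rw [hx] at hit; simp [Option.bind] at hit
    | some x =>
      rw [hx] at hit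
      simp only [Option.bind_some] at hit
      have hxV := hp v hv x hx
      have := ih x w hxV.1 hit
      exact ⟨le_of_lt (lt_of_lt_of_le hxV.2 this.1), this.2⟩

variable (hp : HeapProp V p) (hh : IsHeap V p H h)
include hp hh

lemma mem_V_of_mem_H (v : α) (hv : v ∈ H) : v ∈ V := ((hh.2.2 v).mp hv).1

lemma le_head (v : α) (hv : v ∈ H) : v ≤ h := by
  obtain ⟨hvV, k, hk⟩ := (hh.2.2 v).mp hv
  exact (le_of_pIter V p hp k v h hvV hk).1

lemma head_mem_H : h ∈ H := (hh.2.2 h).mpr ⟨hh.1, 0, rfl⟩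

lemma child_mem_H (x w : α) (hx : x ∈ H) (hwV : w ∈ V) (hpw : p w = some x) : w ∈ H := by
  obtain ⟨hxV, k, hk⟩ := (hh.2.2 x).mp hx
  exact (hh.2.2 w).mpr ⟨hwV, k + 1, by rw [pIter_succ, hpw, Option.bind_some]; exact hk⟩

lemma parent_mem_H (w x : α) (hw : w ∈ H) (hpw : p w = some x) : x ∈ H ∧ w < x := by
  have hwV := mem_V_of_mem_H V p H h hp hh w hw
  have hxV := hp w hwV x hpw
  obtain ⟨_, k, hk⟩ := (hh.2.2 w).mp hw
  cases k with
  | zero =>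
    rw [pIter_zero] at hk; cases hk
    rw [hh.2.1] at hpw; cases hpw
  | succ k =>
    rw [pIter_succ, hpw, Option.bind_some] at hk
    exact ⟨(hh.2.2 x).mpr ⟨hxV.1, k, hk⟩, hxV.2⟩

lemma exists_parent (v : α) (hv : v ∈ H) (hvh : v ≠ h) : ∃ x, p v = some x := by
  cases hx : p v with
  | some x => exact ⟨x, rfl⟩
  | none =>
    obtain ⟨_, k, hk⟩ := (hh.2.2 v).mp hv
    cases k with
    | zero => rw [pIter_zero] at hk; cases hk; exact absurd rfl hvh
    | succ k => rw [pIter_succ, hx] at hk; simp [Option.bind] at hk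

lemma rk_eq_zero_iff' (v : α) (hv : v ∈ H) : rk H v = 0 ↔ v = h := by
  constructor
  · intro h0
    have hhm := head_mem_H V p H h hp hh
    have hle := le_head V p H h hp hh v hv
    rcases eq_or_lt_of_le hle with heq | hlt
    · exact heq
    · exfalso
      have : h ∈ H.filter (fun w => v < w) := Finset.mem_filter.mpr ⟨hhm, hlt⟩
      rw [rk, Finset.card_eq_zero] at h0
      rw [h0] at this
      simp at this
  · intro hv'
    rw [hv', rk, Finset.card_eq_zero, Finset.filter_eq_empty_iff]
    intro w hw
    exact not_lt.mpr (le_head V p H h hp hh w hw)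

/-- Children of a node of `H` are in `H` and smaller; children of `nxt H b` are `≤ b`. -/
lemma child_le (b x w : α) (hb : b ∈ H) (h1 : 1 ≤ rk H b) (hx : x = nxt H b)
    (hwV : w ∈ V) (hpw : p w = some x) : w ≤ b := by
  have hxH : x ∈ H := hx ▸ (nxt_spec H b h1).1
  have hwH := child_mem_H V p H h hp hh x w hxH hwV hpw
  have hwx : w < x := (hp w hwV x hpw).2
  exact le_of_lt_nxt H b h1 w hwH (hx ▸ hwx)

end heapfacts

section preserve
variable (V : Finset α) (p : α → Option α) (H : Finset α) (h : α)

lemma roundStep_heapProp (hp : HeapProp V p) : HeapProp V (roundStep V p) := by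
  intro v hv z hz
  cases hx : p v with
  | none => rw [roundStep_none V p v hx] at hz; cases hz
  | some x =>
    rw [roundStep_some V p v x hx] at hz
    have hxV := hp v hv x hx
    by_cases hne : (V.filter (fun w => p w = some x)).Nonempty
    · rw [dif_pos hne] at hz
      by_cases hm : v = (V.filter (fun w => p w = some x)).max' hne
      · rw [if_pos hm] at hz; cases hz; exact hxV
      · rw [if_neg hm] at hz; cases hz
        have hmem := Finset.max'_mem _ hne
        rw [Finset.mem_filter] at hmem
        have hle : v ≤ (V.filter (fun w => p w = some x)).max' hne :=
          Finset.le_max' _ v (Finset.mem_filter.mpr ⟨hv, hx⟩)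
        exact ⟨hmem.1, lt_of_le_of_ne hle hm⟩
    · rw [dif_neg hne] at hz; cases hz; exact hxV

variable (hp : HeapProp V p) (hh : IsHeap V p H h)
include hp hh

/-- For `v ∈ H` with a parent, the new parent is in `H` and above `v`. -/
lemma roundStep_parent (v x : α) (hv : v ∈ H) (hx : p v = some x) :
    ∃ z, roundStep V p v = some z ∧ z ∈ H ∧ v < z := by
  have hvV := mem_V_of_mem_H V p H h hp hh v hv
  have hxH := parent_mem_H V p H h hp hh v x hv hx
  rw [roundStep_some V p v x hx]
  have hne : (V.filter (fun w => p w = some x)).Nonempty :=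
    ⟨v, Finset.mem_filter.mpr ⟨hvV, hx⟩⟩
  rw [dif_pos hne]
  by_cases hm : v = (V.filter (fun w => p w = some x)).max' hne
  · rw [if_pos hm]; exact ⟨x, rfl, hxH⟩
  · rw [if_neg hm]
    refine ⟨_, rfl, ?_, ?_⟩
    · have hmem := Finset.max'_mem _ hne
      rw [Finset.mem_filter] at hmem
      exact child_mem_H V p H h hp hh x _ hxH.1 hmem.1 hmem.2
    · exact lt_of_le_of_ne (Finset.le_max' _ v (Finset.mem_filter.mpr ⟨hvV, hx⟩)) hm

lemma roundStep_isHeap : IsHeap V (roundStep V p) H h := by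
  refine ⟨hh.1, roundStep_none V p h hh.2.1, fun v => ?_⟩
  constructor
  · intro hv
    refine ⟨mem_V_of_mem_H V p H h hp hh v hv, ?_⟩
    -- induction on rank
    have key : ∀ d : ℕ, ∀ v ∈ H, rk H v ≤ d → ∃ k, pIter (roundStep V p) k v = some h := by
      intro d
      induction d with
      | zero =>
        intro v hv hd
        have : v = h := (rk_eq_zero_iff' V p H h hp hh v hv).mp (Nat.le_zero.mp hd)
        exact ⟨0, by rw [pIter_zero, this]⟩
      | succ d ih =>
        intro v hv hd
        by_cases hvh : v = h
        · exact ⟨0, by rw [pIter_zero, hvh]⟩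
        · obtain ⟨x, hx⟩ := exists_parent V p H h hp hh v hv hvh
          obtain ⟨z, hz, hzH, hvz⟩ := roundStep_parent V p H h hp hh v x hv hx
          have : rk H z < rk H v := rk_lt_of_lt H v z hzH hvz
          obtain ⟨k, hk⟩ := ih z hzH (by omega)
          exact ⟨k + 1, by rw [pIter_succ, hz, Option.bind_some]; exact hk⟩
    exact key (rk H v) v hv le_rfl
  · rintro ⟨hvV, k, hk⟩
    induction k generalizing v with
    | zero =>
      rw [pIter_zero] at hk; cases hk
      exact head_mem_H V p H h hp hh
    | succ k ih =>
      rw [pIter_succ] at hk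
      cases hz : roundStep V p v with
      | none => rw [hz] at hk; simp [Option.bind] at hk
      | some z =>
        rw [hz, Option.bind_some] at hk
        have hzV := (roundStep_heapProp V p hp) v hvV z hz
        have hzH := ih z hzV.1 hk
        -- now show v ∈ H
        cases hx : p v with
        | none => rw [roundStep_none V p v hx] at hz; cases hz
        | some x =>
          have hxH : x ∈ H := by
            rw [roundStep_some V p v x hx] at hz
            by_cases hne : (V.filter (fun w => p w = some x)).Nonempty
            · rw [dif_pos hne] at hz
              by_cases hm : v = (V.filter (fun w => p w = some x)).max' hne
              · rw [if_pos hm] at hz; cases hz; exact hzH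
              · rw [if_neg hm] at hz; cases hz
                have hmem := Finset.max'_mem _ hne
                rw [Finset.mem_filter] at hmem
                exact (parent_mem_H V p H h hp hh _ x hzH hmem.2).1
            · rw [dif_neg hne] at hz; cases hz; exact hzH
          exact child_mem_H V p H h hp hh x v hxH hvV hx

end preserve

section rounds
variable (V : Finset α) (p : α → Option α) (H : Finset α) (h : α)
variable (hp : HeapProp V p) (hh : IsHeap V p H h)
include hp hh

/-- If `v`'s parent is `nxt H v`, then `v` is the max child and keeps its parent. -/
lemma keep_parent (v : α) (hv : v ∈ H) (h1 : 1 ≤ rk H v) (hx : p v = some (nxt H v)) :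
    roundStep V p v = some (nxt H v) := by
  set x := nxt H v with hxdef
  have hvV := mem_V_of_mem_H V p H h hp hh v hv
  rw [roundStep_some V p v x hx]
  have hne : (V.filter (fun w => p w = some x)).Nonempty :=
    ⟨v, Finset.mem_filter.mpr ⟨hvV, hx⟩⟩
  rw [dif_pos hne]
  have hmax : (V.filter (fun w => p w = some x)).max' hne = v := by
    apply le_antisymm
    · apply Finset.max'_le
      intro w hw
      rw [Finset.mem_filter] at hw
      exact child_le V p H h hp hh v x w hv h1 rfl hw.1 hw.2
    · exact Finset.le_max' _ v (Finset.mem_filter.mpr ⟨hvV, hx⟩)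
  rw [if_pos hmax.symm]

/-- If `v`'s parent `x` equals `nxt H b` and `b` is also a child of `x`, a non-max child `v`
is redirected to `b`. -/
lemma redirect (v b x : α) (hv : v ∈ H) (hx : p v = some x) (hb : b ∈ H) (h1 : 1 ≤ rk H b)
    (hxb : x = nxt H b) (hpb : p b = some x) (hvb : v ≠ b) :
    roundStep V p v = some b := by
  have hvV := mem_V_of_mem_H V p H h hp hh v hv
  have hbV := mem_V_of_mem_H V p H h hp hh b hb
  rw [roundStep_some V p v x hx]
  have hne : (V.filter (fun w => p w = some x)).Nonempty :=
    ⟨v, Finset.mem_filter.mpr ⟨hvV, hx⟩⟩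
  rw [dif_pos hne]
  have hmax : (V.filter (fun w => p w = some x)).max' hne = b := by
    apply le_antisymm
    · apply Finset.max'_le
      intro w hw
      rw [Finset.mem_filter] at hw
      exact child_le V p H h hp hh b x w hb h1 hxb hw.1 hw.2
    · exact Finset.le_max' _ b (Finset.mem_filter.mpr ⟨hbV, hpb⟩)
  rw [hmax, if_neg hvb]

lemma invariant : ∀ i : ℕ,
    HeapProp V ((fun q => roundStep V q)^[i] p) ∧
    IsHeap V ((fun q => roundStep V q)^[i] p) H h ∧
    (∀ v ∈ H, 1 ≤ rk H v → rk H v ≤ i →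
      ((fun q => roundStep V q)^[i] p) v = some (nxt H v)) ∧
    (∀ v ∈ H, i + 1 ≤ rk H v → ∀ x,
      ((fun q => roundStep V q)^[i] p) v = some x → i ≤ rk H x + 1) := by
  intro i
  induction i with
  | zero =>
    exact ⟨hp, hh, fun v hv h1 h0 => by omega, fun v hv h1 x hx => by omega⟩
  | succ i ih =>
    obtain ⟨hq, hqh, hC, hD⟩ := ih
    set q := (fun q => roundStep V q)^[i] p with hqdef
    have hiter : (fun q => roundStep V q)^[i+1] p = roundStep V q := by
      rw [Function.iterate_succ_apply']
    rw [hiter]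
    refine ⟨roundStep_heapProp V q hq, roundStep_isHeap V q H h hq hqh, ?_, ?_⟩
    · -- the chain extends one step
      intro v hv h1 hle
      rcases Nat.lt_or_ge (rk H v) (i+1) with hlt | hge
      · exact keep_parent V q H h hq hqh v hv h1 (hC v hv h1 (by omega))
      · have hri : rk H v = i + 1 := le_antisymm hle hge
        have hvh : v ≠ h := by
          intro e
          have := (rk_eq_zero_iff' V q H h hq hqh v hv).mpr e
          omega
        obtain ⟨x, hx⟩ := exists_parent V q H h hq hqh v hv hvh
        have hxH := parent_mem_H V q H h hq hqh v x hv hx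
        have hrx_lt : rk H x < i + 1 := hri ▸ rk_lt_of_lt H v x hxH.1 hxH.2
        have hrx_ge : i ≤ rk H x + 1 := hD v hv (by omega) x hx
        have hb := nxt_spec H v h1
        have hrb : rk H (nxt H v) = i := by rw [rk_nxt H v h1]; omega
        rcases Nat.lt_or_ge (rk H x) i with hxi | hxi
        · have h1b : 1 ≤ rk H (nxt H v) := by omega
          have hqb : q (nxt H v) = some (nxt H (nxt H v)) := hC _ hb.1 h1b (by omega)
          have hxn : nxt H (nxt H v) = x :=
            rk_inj H _ x (nxt_spec H _ h1b).1 hxH.1 (by rw [rk_nxt H _ h1b]; omega)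
          rw [hxn] at hqb
          exact redirect V q H h hq hqh v (nxt H v) x hv hx hb.1 h1b hxn.symm hqb
            (ne_of_lt hb.2)
        · have hxn : x = nxt H v := rk_inj H x _ hxH.1 hb.1 (by omega)
          rw [hxn] at hx
          exact keep_parent V q H h hq hqh v hv h1 hx
    · -- depth bound for the remaining nodes
      intro v hv h2 z hz
      cases hx : q v with
      | none => rw [roundStep_none V q v hx] at hz; cases hz
      | some x =>
        have hxH := parent_mem_H V q H h hq hqh v x hv hx
        have hD' : i ≤ rk H x + 1 := hD v hv (by omega) x hx
        rcases Nat.lt_or_ge (rk H x) i with hxi | hxi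
        · obtain ⟨b, hbH, hrb⟩ := exists_rk H (rk H v) v hv i (by omega) (by omega)
          have h1b : 1 ≤ rk H b := by omega
          have hqb : q b = some (nxt H b) := hC b hbH h1b (by omega)
          have hxb : nxt H b = x :=
            rk_inj H _ x (nxt_spec H b h1b).1 hxH.1 (by rw [rk_nxt H b h1b]; omega)
          rw [hxb] at hqb
          have hvb : v ≠ b := by
            intro e; rw [e] at h2; omega
          have hred := redirect V q H h hq hqh v b x hv hx hbH h1b hxb.symm hqb hvb
          rw [hred] at hz; cases hz
          omega
        · rw [roundStep_some V q v x hx] at hz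
          have hvV := mem_V_of_mem_H V q H h hq hqh v hv
          have hne : (V.filter (fun w => q w = some x)).Nonempty :=
            ⟨v, Finset.mem_filter.mpr ⟨hvV, hx⟩⟩
          rw [dif_pos hne] at hz
          by_cases hm : v = (V.filter (fun w => q w = some x)).max' hne
          · rw [if_pos hm] at hz; cases hz; omega
          · rw [if_neg hm] at hz; cases hz
            have hmem := Finset.max'_mem _ hne
            rw [Finset.mem_filter] at hmem
            have hzH := child_mem_H V q H h hq hqh x _ hxH.1 hmem.1 hmem.2
            have := rk_lt_of_lt H _ x hxH.1 (hq _ hmem.1 x hmem.2).2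
            omega

end rounds
end S5


set_option linter.unusedVariables false in
open S5 in
/-- Any heap `H` becomes a sorted list after at most `|H|` rounds of the linearization
dynamics: after `|H|` rounds the heap is linearized with respect to its minimum element,
every non-head node of `H` is the unique (hence maximum) child of its predecessor, and the
predecessor links form a chain running through all elements of `H` (every element of `H` is
reached by iterating the predecessor map from the minimum). -/
theorem stmt5 {α : Type*} [LinearOrder α] (V : Finset α) (p : α → Option α)
    (hp : HeapProp V p) (H : Finset α) (h : α) (hheap : IsHeap V p H h)
    (hne : H.Nonempty) :
    ∀ i : ℕ, H.card ≤ i →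
      LinearizedWrt V ((fun q => roundStep V q)^[i] p) H h (H.min' hne) ∧
      (∀ v ∈ H, v ≠ h → ∀ w ∈ H, w ≠ h →
        (fun q => roundStep V q)^[i] p w = (fun q => roundStep V q)^[i] p v → w = v) ∧
      (∀ v ∈ H, ∃ k : ℕ,
        pIter ((fun q => roundStep V q)^[i] p) k (H.min' hne) = some v) := by
  intro i hi
  obtain ⟨hq, hqh, hC, hD⟩ := S5.invariant V p H h hp hheap i
  set q := (fun q => roundStep V q)^[i] p with hqdef
  have hrk_le : ∀ v ∈ H, rk H v ≤ H.card - 1 := by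
    intro v hv
    have hsub : H.filter (fun w => v < w) ⊆ H.erase v := by
      intro x hx
      rw [Finset.mem_filter] at hx
      exact Finset.mem_erase.mpr ⟨ne_of_gt hx.2, hx.1⟩
    calc rk H v ≤ (H.erase v).card := Finset.card_le_card hsub
    _ = H.card - 1 := Finset.card_erase_of_mem hv
  have hcpos : 1 ≤ H.card := Finset.card_pos.mpr hne
  have hpos : ∀ v ∈ H, v ≠ h → 1 ≤ rk H v := by
    intro v hv hvh
    rcases Nat.eq_zero_or_pos (rk H v) with h0 | h1
    · exact absurd ((rk_eq_zero_iff' V q H h hq hqh v hv).mp h0) hvh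
    · exact h1
  have hCall : ∀ v ∈ H, v ≠ h → q v = some (nxt H v) := by
    intro v hv hvh
    exact hC v hv (hpos v hv hvh) (by have := hrk_le v hv; omega)
  refine ⟨?_, ?_, ?_⟩
  · -- linearized w.r.t. the minimum
    intro v hv hvh _ w hwV hw
    rw [hCall v hv hvh] at hw
    exact child_le V q H h hq hqh v (nxt H v) w hv (hpos v hv hvh) rfl hwV hw
  · -- each non-head node is the unique child of its predecessor
    intro v hv hvh w hwH hwh heq
    rw [hCall v hv hvh, hCall w hwH hwh] at heq
    have e : nxt H w = nxt H v := Option.some_injective _ heq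
    have e1 := rk_nxt H w (hpos w hwH hwh)
    have e2 := rk_nxt H v (hpos v hv hvh)
    rw [e] at e1
    have h1v := hpos v hv hvh
    have h1w := hpos w hwH hwh
    exact rk_inj H w v hwH hv (by omega)
  · -- the chain from the minimum reaches every node
    set m := H.min' hne with hm
    have hmH : m ∈ H := Finset.min'_mem H hne
    have hrm : rk H m = H.card - 1 := by
      have hfe : H.filter (fun w => m < w) = H.erase m := by
        ext x
        simp only [Finset.mem_filter, Finset.mem_erase]
        constructor
        · rintro ⟨hx, hlt⟩; exact ⟨ne_of_gt hlt, hx⟩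
        · rintro ⟨hne', hx⟩; exact ⟨hx, lt_of_le_of_ne (Finset.min'_le H x hx) (Ne.symm hne')⟩
      rw [rk, hfe, Finset.card_erase_of_mem hmH]
    have key : ∀ d : ℕ, ∀ v ∈ H, H.card - 1 - rk H v ≤ d → ∃ k, pIter q k m = some v := by
      intro d
      induction d with
      | zero =>
        intro v hv hd
        have hrv : rk H v = H.card - 1 := by have := hrk_le v hv; omega
        have : v = m := rk_inj H v m hv hmH (by omega)
        exact ⟨0, by rw [pIter_zero, this]⟩
      | succ d ih =>
        intro v hv hd
        by_cases hvm : rk H v = H.card - 1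
        · have : v = m := rk_inj H v m hv hmH (by omega)
          exact ⟨0, by rw [pIter_zero, this]⟩
        · have hvlt : rk H v < H.card - 1 := lt_of_le_of_ne (hrk_le v hv) hvm
          obtain ⟨b, hbH, hrb⟩ := exists_rk H (rk H m) m hmH (rk H v + 1) (by omega) (by omega)
          have h1b : 1 ≤ rk H b := by omega
          have hbh : b ≠ h := by
            intro e
            have := (rk_eq_zero_iff' V q H h hq hqh b hbH).mpr e
            omega
          have hqb : q b = some (nxt H b) := hCall b hbH hbh
          have hbv : nxt H b = v :=
            rk_inj H _ v (nxt_spec H b h1b).1 hv (by rw [rk_nxt H b h1b]; omega)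
          obtain ⟨k, hk⟩ := ih b hbH (by omega)
          exact ⟨k + 1, by rw [pIter_succ', hk, Option.bind_some, hqb, hbv]⟩
    intro v hv
    exact key H.card v hv (by omega)
end

section
/- If a heap H is linearized with respect to a node u ∈ H, then after one round of the linearization dynamics the heap on the vertex set H is again linearized with respect to u (the linearized prefix of a heap is preserved by the dynamics). -/
/-- If a heap `H` with head `h` is linearized with respect to a node `u ∈ H`, then after one
round of the linearization dynamics the heap on the vertex set `H` is again linearized with
respect to `u`: the linearized prefix of a heap is preserved by the dynamics. -/
theorem stmt6 {α : Type*} [LinearOrder α] (V : Finset α) (p : α → Option α)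
    (hp : HeapProp V p) (H : Finset α) (h : α) (hheap : IsHeap V p H h)
    (u : α) (hu : u ∈ H)
    (hlin : LinearizedWrt V p H h u) :
    LinearizedWrt V (roundStep V p) H h u := by
  obtain ⟨hhV, hph, hH⟩ := hheap
  intro v hv hvh huv w hw hpw
  obtain ⟨hvV, k, hk⟩ := (hH v).1 hv
  obtain ⟨x, hx⟩ : ∃ x, p v = some x := by
    cases hpv : p v with
    | some x => exact ⟨x, rfl⟩
    | none =>
      exfalso; apply hvh
      cases k with
      | zero => simpa [pIter] using hk
      | succ k => simp [pIter, hpv] at hk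
  obtain ⟨hxV, hvx⟩ := hp v hvV x hx
  set S := V.filter (fun w => p w = some x) with hS
  have hvS : v ∈ S := Finset.mem_filter.2 ⟨hvV, hx⟩
  have hSne : S.Nonempty := ⟨v, hvS⟩
  have hmax : S.max' hSne = v := by
    apply le_antisymm
    · have := Finset.mem_filter.1 (S.max'_mem hSne)
      exact hlin v hv hvh huv _ this.1 (this.2.trans hx.symm)
    · exact S.le_max' v hvS
  have hrv : roundStep V p v = some x := by
    rw [roundStep]
    simp only [hx]
    rw [dif_pos hSne, if_pos hmax.symm]
  rw [hrv] at hpw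
  cases hpwc : p w with
  | none => rw [roundStep] at hpw; simp [hpwc] at hpw
  | some y =>
    set Sy := V.filter (fun z => p z = some y) with hSy
    have hwSy : w ∈ Sy := Finset.mem_filter.2 ⟨hw, hpwc⟩
    have hSyne : Sy.Nonempty := ⟨w, hwSy⟩
    rw [roundStep] at hpw
    simp only [hpwc] at hpw
    rw [dif_pos hSyne] at hpw
    by_cases hwm : w = Sy.max' hSyne
    · rw [if_pos hwm] at hpw
      have hyx : y = x := Option.some_injective _ hpw
      exact hlin v hv hvh huv w hw (by rw [hpwc, hyx, hx])
    · rw [if_neg hwm] at hpw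
      have hxm : Sy.max' hSyne = x := Option.some_injective _ hpw
      have hxSy : x ∈ Sy := hxm ▸ Sy.max'_mem hSyne
      obtain ⟨hxV', hpx⟩ := Finset.mem_filter.1 hxSy
      obtain ⟨k', hk'⟩ : ∃ k', pIter p k' x = some h := by
        cases k with
        | zero => exact absurd (Option.some_injective _ hk) hvh
        | succ k => exact ⟨k, by rw [pIter, hx] at hk; exact hk⟩
      have hwH : w ∈ H := by
        apply (hH w).2
        refine ⟨hw, ?_⟩
        cases k' with
        | zero =>
          exfalso
          have hxh : x = h := Option.some_injective _ hk'
          rw [hxh, hph] at hpx; exact Option.some_ne_none y hpx.symm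
        | succ k' =>
          rw [pIter, hpx] at hk'
          exact ⟨k' + 1, by rw [pIter, hpwc]; exact hk'⟩
      by_contra hwv
      push_neg at hwv
      have huw : u ≤ w := huv.trans hwv.le
      have hwh : w ≠ h := fun e => by rw [e, hph] at hpwc; exact Option.some_ne_none y hpwc.symm
      have hxw : x ≤ w := hlin w hwH hwh huw x hxV' (hpx.trans hpwc.symm)
      have hwx : w < x :=
        lt_of_le_of_ne (hxm ▸ Sy.le_max' w hwSy) (fun e => hwm (e.trans hxm.symm))
      exact absurd hxw (not_le.2 hwx)
end

section
/- The potential ω strictly decreases under each of the replacement operations performed by the algorithm on an s-edge (x, y) with x ≠ y: (a) if x > y then ω(y, x) < ω(x, y) (reversing the edge after a scan-acknowledgement); (b) if q is any node with q > x then ω(q, y) < ω(x, y) (forwarding the edge endpoint to a predecessor); (c) if z is any node with z > x and z > y then both ω(x, z) < ω(x, y) and ω(y, z) < ω(x, y) (replacing the edge by edges to a larger known node). -/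
/-- The rank of a node `x` among the nodes `V`, sorted in decreasing order of identifier:
the maximum identifier has rank `0`. -/
def ordOf {α : Type*} [LinearOrder α] (V : Finset α) (x : α) : ℕ :=
  (V.filter (fun w => x < w)).card

/-- The potential `ω(x, y) = 2·ord(x) + 2·ord(y) + K(x, y)` of an ordered pair of nodes,
where `K(x, y) = 1` if `x > y` and `0` otherwise. -/
def omegaPot {α : Type*} [LinearOrder α] (V : Finset α) (x y : α) : ℕ :=
  2 * ordOf V x + 2 * ordOf V y + (if y < x then 1 else 0)

lemma ordOf_lt_ordOf {α : Type*} [LinearOrder α] (V : Finset α) {a b : α}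
    (hb : b ∈ V) (hab : a < b) : ordOf V b < ordOf V a := by
  apply Finset.card_lt_card
  constructor
  · intro w hw
    simp only [Finset.mem_filter] at hw ⊢
    exact ⟨hw.1, hab.trans hw.2⟩
  · intro h
    have := h (Finset.mem_filter.mpr ⟨hb, hab⟩)
    simp at this

/-- The potential `ω` strictly decreases under each replacement operation performed by the
algorithm on an s-edge `(x, y)` with `x ≠ y`:
(a) if `x > y` then `ω(y, x) < ω(x, y)` (reversing the edge after a scan-acknowledgement);
(b) if `q > x` then `ω(q, y) < ω(x, y)` (forwarding the edge endpoint to a predecessor);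
(c) if `z > x` and `z > y` then `ω(x, z) < ω(x, y)` and `ω(y, z) < ω(x, y)` (replacing the
edge by edges to a larger known node). -/
theorem stmt8 {α : Type*} [LinearOrder α] (V : Finset α)
    (x y : α) (hx : x ∈ V) (hy : y ∈ V) (hxy : x ≠ y) :
    (x > y → omegaPot V y x < omegaPot V x y) ∧
    (∀ q ∈ V, q > x → omegaPot V q y < omegaPot V x y) ∧
    (∀ z ∈ V, z > x → z > y →
      omegaPot V x z < omegaPot V x y ∧ omegaPot V y z < omegaPot V x y) := by
  refine ⟨?_, ?_, ?_⟩
  · intro h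
    simp only [omegaPot, if_pos h, if_neg (not_lt.mpr h.le)]
    omega
  · intro q hq hqx
    have h1 := ordOf_lt_ordOf V hq hqx
    simp only [omegaPot]
    split <;> split <;> omega
  · intro z hz hzx hzy
    have h1 := ordOf_lt_ordOf V hz hzx
    have h2 := ordOf_lt_ordOf V hz hzy
    simp only [omegaPot]
    constructor <;> (split <;> split <;> omega)
end
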